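/- Define H_I(x, y, t) := y²/2 − 2x³ − tx. Then for all X, Y, t ∈ ℂ with X ≠ 0: H_I(1/X², (4 + tX⁴ − X⁵ + 2X⁶Y)/(2X³), t) + 1/X = 2Y + (1/8)t²X² − (1/4)tX³ + (1/8)X⁴ + (1/2)tX⁴Y − (1/2)X⁵Y + (1/2)X⁶Y². In particular, under Painlevé's algebraic degree-2 transformation R : (x, y) = (1/X², (4 + tX⁴ − X⁵ + 2X⁶Y)/(2X³)), the function H_I + 1/X becomes a polynomial in (X, Y). -/

import Mathlib

/-- Painlevé's holomorphy condition (holoP): under the degree-2 algebraic transformation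
R : (x, y) = (1/X², (4 + tX⁴ − X⁵ + 2X⁶Y)/(2X³)), the function H_I + 1/X becomes a
polynomial in (X, Y). -/
theorem painleve_holomorphy_condition
    (H : ℂ → ℂ → ℂ → ℂ)
    (hH : ∀ x y t : ℂ, H x y t = y ^ 2 / 2 - 2 * x ^ 3 - t * x) :
    ∀ X Y t : ℂ, X ≠ 0 →
      H (1 / X ^ 2) ((4 + t * X ^ 4 - X ^ 5 + 2 * X ^ 6 * Y) / (2 * X ^ 3)) t + 1 / X =
        2 * Y + (1 / 8) * t ^ 2 * X ^ 2 - (1 / 4) * t * X ^ 3 + (1 / 8) * X ^ 4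
          + (1 / 2) * t * X ^ 4 * Y - (1 / 2) * X ^ 5 * Y + (1 / 2) * X ^ 6 * Y ^ 2 := by
  intro X Y t hX
  rw [hH]
  have key : ∀ n : ℕ, (X ^ 12)⁻¹ * X ^ (12 + n) = X ^ n := by
    intro n
    rw [pow_add, ← mul_assoc, inv_mul_cancel₀ (pow_ne_zero _ hX), one_mul]
  field_simp
  ring_nf
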